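/- arXiv:2211.00368 — 3 statements merged into one kernel-verified Lean document; each statement's English description precedes it below -/
import Mathlib

section
/- Let A : ℝ³ → ℝ³ be a linear and invertible map satisfying A(a × b) = (A a) × (A b) for all vectors a, b ∈ ℝ³. Then A preserves the inner product: (A a) ⬝ (A b) = a ⬝ b for all a, b ∈ ℝ³ (hence A ∈ O(3), in fact A ∈ SO(3)). -/
open Matrix

/-- If a linear invertible map `A : ℝ³ → ℝ³` preserves the cross product,
then it preserves the Euclidean inner product. -/
theorem cross_preserving_implies_inner_preserving
    (A : (Fin 3 → ℝ) →ₗ[ℝ] (Fin 3 → ℝ)) (hA : Function.Bijective A)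
    (hcross : ∀ a b : Fin 3 → ℝ, A (crossProduct a b) = crossProduct (A a) (A b)) :
    ∀ a b : Fin 3 → ℝ, (A a) ⬝ᵥ (A b) = a ⬝ᵥ b := by
  have triple : ∀ a b c : Fin 3 → ℝ,
      crossProduct (crossProduct a b) (crossProduct a c)
        = (a ⬝ᵥ crossProduct b c) • a := by
    intro a b c
    ext i
    fin_cases i <;>
      simp [crossProduct, dotProduct, Fin.sum_univ_three] <;> ring
  have key : ∀ a b c : Fin 3 → ℝ,
      (A a) ⬝ᵥ (A (crossProduct b c)) = a ⬝ᵥ (crossProduct b c) := by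
    intro a b c
    rcases eq_or_ne a 0 with rfl | ha
    · simp
    · have hAa : A a ≠ 0 := fun h => ha (hA.1 (by simp [h]))
      have h1 := congrArg A (triple a b c)
      rw [hcross, hcross, hcross, _root_.map_smul, triple] at h1
      have h2 : (A a ⬝ᵥ crossProduct (A b) (A c)) = a ⬝ᵥ crossProduct b c :=
        smul_left_injective ℝ hAa h1
      rw [hcross]
      exact h2
  intro a b
  have hb : b = b 0 • crossProduct (Pi.single 1 1) (Pi.single 2 1)
      + b 1 • crossProduct (Pi.single 2 1) (Pi.single 0 1)
      + b 2 • crossProduct (Pi.single 0 1) (Pi.single 1 1) := by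
    ext i
    fin_cases i <;> simp [crossProduct, Pi.single]
  rw [hb]
  simp only [map_add, _root_.map_smul, dotProduct_add, dotProduct_smul, key]
end

section
/- Let H be a finite-dimensional complex inner product space, let Ŝ_1, …, Ŝ_p be linear operators on H with ‖Ŝ_j‖ ≤ 1 for all j, let e and m be unit vectors in H, and let x_1, …, x_p be real numbers with |x_j| ≤ 1. Suppose that for each j, ⟨e, Ŝ_j e⟩ = x_j, and suppose that for each j there is a constant δ > 0 such that |⟨m', Ŝ_j e⟩| ≤ δ for every unit vector m' orthogonal to e, with moreover Ŝ_j e − x_j e supported on a one-dimensional space spanned by a fixed unit vector f orthogonal to e (i.e., Ŝ_j e = x_j e + c_j f with |c_j| ≤ δ). Then |⟨e, Ŝ_1 ⋯ Ŝ_p e⟩ − x_1 ⋯ x_p| ≤ p δ. -/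
open scoped ComplexOrder

lemma prod_apply_norm_le_aux
    {H : Type*} [NormedAddCommGroup H] [InnerProductSpace ℂ H]
    (L : List (H →L[ℂ] H)) (h : ∀ T ∈ L, ‖T‖ ≤ 1) (v : H) :
    ‖L.prod v‖ ≤ ‖v‖ := by
  induction L with
  | nil => simp
  | cons T L ih =>
      have hT : ‖T‖ ≤ 1 := h T (by simp)
      have hrest : ‖L.prod v‖ ≤ ‖v‖ := ih (fun T' hT' => h T' (by simp [hT']))
      calc ‖(T :: L).prod v‖ = ‖T (L.prod v)‖ := by simp
        _ ≤ ‖T‖ * ‖L.prod v‖ := T.le_opNorm _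
        _ ≤ 1 * ‖v‖ := by
            apply mul_le_mul hT hrest (norm_nonneg _) zero_le_one
        _ = ‖v‖ := one_mul _


lemma expectation_product_estimate_aux
    {H : Type*} [NormedAddCommGroup H] [InnerProductSpace ℂ H]
    (e f : H) (he : ‖e‖ = 1) (hf : ‖f‖ = 1) (hef : (inner ℂ e f : ℂ) = 0)
    (δ : ℝ) (hδ : 0 < δ) :
    ∀ (p : ℕ) (S : Fin p → (H →L[ℂ] H)), (∀ j, ‖S j‖ ≤ 1) →
    ∀ (x : Fin p → ℝ), (∀ j, |x j| ≤ 1) →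
    (∀ j, (inner ℂ e ((S j) e) : ℂ) = (x j : ℂ)) →
    ∀ (c : Fin p → ℂ), (∀ j, ‖c j‖ ≤ δ) →
    (∀ j, (S j) e = (x j : ℂ) • e + (c j) • f) →
    ‖(inner ℂ e ((List.ofFn S).prod e) : ℂ) - ∏ j, (x j : ℂ)‖ ≤ p * δ := by
  intro p
  induction p with
  | zero =>
      intro S hS x hx hdiag c hc hact
      simp only [List.ofFn_zero, List.prod_nil, Finset.univ_eq_empty, Finset.prod_empty,
        ContinuousLinearMap.one_apply]
      have : (inner ℂ e e : ℂ) = 1 := by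
        rw [inner_self_eq_norm_sq_to_K, he]; norm_num
      simp [this, he]
  | succ p ih =>
      intro S hS x hx hdiag c hc hact
      set S' : Fin p → (H →L[ℂ] H) := fun i => S i.castSucc with hS'
      set A : H →L[ℂ] H := (List.ofFn S').prod with hA
      have hIH : ‖(inner ℂ e (A e) : ℂ) - ∏ j : Fin p, (x j.castSucc : ℂ)‖ ≤ p * δ :=
        ih S' (fun j => hS _) (fun i => x i.castSucc) (fun j => hx _)
          (fun j => hdiag _) (fun i => c i.castSucc) (fun j => hc _) (fun j => hact _)
      have hAnorm : ∀ v : H, ‖A v‖ ≤ ‖v‖ := by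
        intro v
        apply prod_apply_norm_le_aux
        intro T hT
        rw [List.mem_ofFn] at hT
        obtain ⟨i, rfl⟩ := hT
        exact hS _
      have hsplit : (List.ofFn S).prod = A * S (Fin.last p) := by
        rw [hA, hS', List.ofFn_succ', List.prod_concat]
      have hinner : (inner ℂ e ((List.ofFn S).prod e) : ℂ)
          = (x (Fin.last p) : ℂ) * inner ℂ e (A e) + c (Fin.last p) * inner ℂ e (A f) := by
        rw [hsplit, ContinuousLinearMap.mul_apply, hact (Fin.last p)]
        rw [map_add, map_smul, map_smul, inner_add_right, inner_smul_right, inner_smul_right]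
      have hprod : (∏ j, (x j : ℂ)) = (∏ j : Fin p, (x j.castSucc : ℂ)) * (x (Fin.last p) : ℂ) :=
        Fin.prod_univ_castSucc _
      have key : (inner ℂ e ((List.ofFn S).prod e) : ℂ) - ∏ j, (x j : ℂ)
          = (x (Fin.last p) : ℂ) * ((inner ℂ e (A e) : ℂ) - ∏ j : Fin p, (x j.castSucc : ℂ))
            + c (Fin.last p) * inner ℂ e (A f) := by
        rw [hinner, hprod]; ring
      rw [key]
      have h1 : ‖(x (Fin.last p) : ℂ)
          * ((inner ℂ e (A e) : ℂ) - ∏ j : Fin p, (x j.castSucc : ℂ))‖ ≤ p * δ := by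
        rw [norm_mul, Complex.norm_real, Real.norm_eq_abs]
        calc |x (Fin.last p)| * ‖_‖ ≤ 1 * (p * δ) := by
              apply mul_le_mul (hx _) hIH (norm_nonneg _) zero_le_one
          _ = p * δ := one_mul _
      have h2 : ‖c (Fin.last p) * inner ℂ e (A f)‖ ≤ δ := by
        rw [norm_mul]
        have hin : ‖(inner ℂ e (A f) : ℂ)‖ ≤ 1 := by
          calc ‖(inner ℂ e (A f) : ℂ)‖ = ‖(inner ℂ e (A f) : ℂ)‖ := rfl
            _ ≤ ‖e‖ * ‖A f‖ := norm_inner_le_norm _ _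
            _ ≤ 1 * 1 := by
                apply mul_le_mul he.le ((hAnorm f).trans hf.le) (norm_nonneg _) zero_le_one
            _ = 1 := one_mul _
        calc ‖c (Fin.last p)‖ * ‖(inner ℂ e (A f) : ℂ)‖
            ≤ δ * 1 := mul_le_mul (hc _) hin (norm_nonneg _) hδ.le
          _ = δ := mul_one _
      calc ‖_‖ ≤ _ + _ := norm_add_le _ _
        _ ≤ p * δ + δ := add_le_add h1 h2
        _ = ((p + 1 : ℕ) : ℝ) * δ := by push_cast; ring
      

/-- Abstract version of Lemma 3: if operators `Ŝ j` of norm at most one have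
coherent-state expectations `x j` and satisfy `Ŝ j e = x j • e + c j • f` with `|c j| ≤ δ`
for unit vectors `e ⊥ f`, then the expectation of their product differs from the
product `x 1 ⋯ x p` by at most `p δ`. -/
theorem expectation_product_estimate
    {H : Type*} [NormedAddCommGroup H] [InnerProductSpace ℂ H] [FiniteDimensional ℂ H]
    (p : ℕ) (S : Fin p → (H →L[ℂ] H)) (hS : ∀ j, ‖S j‖ ≤ 1)
    (e f : H) (he : ‖e‖ = 1) (hf : ‖f‖ = 1) (hef : (inner ℂ e f : ℂ) = 0)
    (x : Fin p → ℝ) (hx : ∀ j, |x j| ≤ 1)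
    (hdiag : ∀ j, (inner ℂ e ((S j) e) : ℂ) = (x j : ℂ))
    (δ : ℝ) (hδ : 0 < δ)
    (c : Fin p → ℂ) (hc : ∀ j, ‖c j‖ ≤ δ)
    (hact : ∀ j, (S j) e = (x j : ℂ) • e + (c j) • f) :
    ‖(inner ℂ e ((List.ofFn S).prod e) : ℂ) - ∏ j, (x j : ℂ)‖ ≤ p * δ := by
  exact expectation_product_estimate_aux e f he hf hef δ hδ p S hS x hx hdiag c hc hact
end

section
/- For the Heisenberg dimer partition function Z_s(β) = Σ_{S=0}^{2s} (2S+1) exp(−(β/s²)(½S(S+1) − s(s+1))), the scaled quantity (2s+1)^{−2} Z_s(β) converges as s → ∞ to the classical dimer partition function Z_cl(β) = sinh(β)/β. -/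
open Filter Topology Finset

private lemma exp_mono_aux (c y z : ℝ) (hc : 0 < c) (hyz : y ≤ z) (hy : 0 ≤ y) :
    Real.exp (-(c * z ^ 2)) ≤ Real.exp (-(c * y ^ 2)) := by
  apply Real.exp_le_exp.mpr
  have h := mul_le_mul_of_nonneg_left (mul_self_le_mul_self hy hyz) hc.le
  nlinarith [h]

private lemma pt_aux (c y : ℝ) (hc : 0 < c) (hy : 0 ≤ y) :
    c * (2 * y + 1) * Real.exp (-(c * (y + 1) ^ 2))
      ≤ Real.exp (-(c * y ^ 2)) - Real.exp (-(c * (y + 1) ^ 2)) ∧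
    Real.exp (-(c * y ^ 2)) - Real.exp (-(c * (y + 1) ^ 2))
      ≤ c * (2 * y + 1) * Real.exp (-(c * y ^ 2)) := by
  set t : ℝ := c * (2 * y + 1) with ht_def
  have ht0 : 0 < t := by rw [ht_def]; positivity
  have hsplit : Real.exp (-(c * (y + 1) ^ 2)) = Real.exp (-(c * y ^ 2)) * Real.exp (-t) := by
    rw [← Real.exp_add]
    congr 1
    rw [ht_def]; ring
  have h1 : 1 - t ≤ Real.exp (-t) := by
    have := Real.add_one_le_exp (-t); linarith
  have h2 : t + 1 ≤ Real.exp t := by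
    have := Real.add_one_le_exp t; linarith
  have hE : 0 < Real.exp (-(c * y ^ 2)) := Real.exp_pos _
  have het : 0 < Real.exp (-t) := Real.exp_pos _
  have hprod : Real.exp (-t) * Real.exp t = 1 := by
    rw [← Real.exp_add]; simp
  have hkey : t * Real.exp (-t) ≤ 1 - Real.exp (-t) := by
    nlinarith [Real.exp_pos t]
  constructor
  · rw [hsplit]; nlinarith
  · rw [hsplit]; nlinarith

private lemma dimer_key (β : ℝ) (hβ : 0 < β) (n : ℕ) (hn : 1 ≤ n) :
    |((n + 1 : ℝ) ^ 2)⁻¹ *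
        (∑ S ∈ Finset.range (n + 1), (2 * (S : ℝ) + 1) *
          Real.exp (-(β / ((n : ℝ) / 2) ^ 2) *
            ((S : ℝ) * ((S : ℝ) + 1) / 2 - ((n : ℝ) / 2) * ((n : ℝ) / 2 + 1))))
      - Real.exp (β * (((n : ℝ) + 2) / (n : ℝ))) *
        ((1 - Real.exp (-(2 * β * (((n : ℝ) + 1) ^ 2 / (n : ℝ) ^ 2)))) *
          (((n : ℝ) ^ 2 / ((n : ℝ) + 1) ^ 2) * (2 * β)⁻¹))|
    ≤ Real.exp (β * (((n : ℝ) + 2) / (n : ℝ))) * ((2 * (n : ℝ) + 1) / ((n : ℝ) + 1) ^ 2) := by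
  set x : ℝ := (n : ℝ) with hx_def
  have hx : (1 : ℝ) ≤ x := by rw [hx_def]; exact_mod_cast hn
  have hx0 : x ≠ 0 := by linarith
  set c : ℝ := 2 * β / x ^ 2 with hc_def
  have hc : 0 < c := by positivity
  set A : ℝ := β * ((x + 2) / x) with hA_def
  -- exponent identity
  have hexp : ∀ S : ℕ, (-(β / (x / 2) ^ 2) *
      ((S : ℝ) * ((S : ℝ) + 1) / 2 - (x / 2) * (x / 2 + 1)))
      = A + -(c * ((S : ℝ) * ((S : ℝ) + 1))) := by
    intro S
    rw [hA_def, hc_def]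
    field_simp
    ring
  set F : ℝ := ∑ S ∈ Finset.range (n + 1),
      (2 * (S : ℝ) + 1) * Real.exp (-(c * ((S : ℝ) * ((S : ℝ) + 1)))) with hF_def
  set U : ℝ := ∑ S ∈ Finset.range (n + 1),
      (2 * (S : ℝ) + 1) * Real.exp (-(c * (S : ℝ) ^ 2)) with hU_def
  set L : ℝ := ∑ S ∈ Finset.range (n + 1),
      (2 * (S : ℝ) + 1) * Real.exp (-(c * ((S : ℝ) + 1) ^ 2)) with hL_def
  set D : ℝ := 1 - Real.exp (-(c * (x + 1) ^ 2)) with hD_def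
  -- telescoping
  have tel : ∑ S ∈ Finset.range (n + 1),
      (Real.exp (-(c * (S : ℝ) ^ 2)) - Real.exp (-(c * ((S : ℝ) + 1) ^ 2))) = D := by
    have h := Finset.sum_range_sub' (f := fun S : ℕ => Real.exp (-(c * (S : ℝ) ^ 2))) (n + 1)
    simp only [Nat.cast_add, Nat.cast_one] at h
    rw [h]
    simp [hD_def, hx_def]
  -- pointwise bounds on the differences
  have pt : ∀ S : ℕ,
      c * (2 * (S : ℝ) + 1) * Real.exp (-(c * ((S : ℝ) + 1) ^ 2))
        ≤ Real.exp (-(c * (S : ℝ) ^ 2)) - Real.exp (-(c * ((S : ℝ) + 1) ^ 2)) ∧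
      Real.exp (-(c * (S : ℝ) ^ 2)) - Real.exp (-(c * ((S : ℝ) + 1) ^ 2))
        ≤ c * (2 * (S : ℝ) + 1) * Real.exp (-(c * (S : ℝ) ^ 2)) :=
    fun S => pt_aux c (S : ℝ) hc S.cast_nonneg
  -- F between L and U
  have hFU : F ≤ U := by
    refine Finset.sum_le_sum fun S _ => ?_
    have hS0 : (0 : ℝ) ≤ (S : ℝ) := S.cast_nonneg
    have hmono : Real.exp (-(c * ((S : ℝ) * ((S : ℝ) + 1)))) ≤ Real.exp (-(c * (S : ℝ) ^ 2)) := by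
      apply Real.exp_le_exp.mpr
      have : 0 < c := hc
      nlinarith
    have : (0 : ℝ) ≤ 2 * (S : ℝ) + 1 := by linarith
    exact mul_le_mul_of_nonneg_left hmono this
  have hLF : L ≤ F := by
    refine Finset.sum_le_sum fun S _ => ?_
    have hS0 : (0 : ℝ) ≤ (S : ℝ) := S.cast_nonneg
    have hmono : Real.exp (-(c * ((S : ℝ) + 1) ^ 2)) ≤ Real.exp (-(c * ((S : ℝ) * ((S : ℝ) + 1)))) := by
      apply Real.exp_le_exp.mpr
      have : 0 < c := hc
      nlinarith
    have : (0 : ℝ) ≤ 2 * (S : ℝ) + 1 := by linarith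
    exact mul_le_mul_of_nonneg_left hmono this
  -- D/c between L and U
  have hLD : c * L ≤ D := by
    rw [← tel, hL_def, Finset.mul_sum]
    refine Finset.sum_le_sum fun S _ => ?_
    rw [← mul_assoc]
    exact (pt S).1
  have hUD : D ≤ c * U := by
    rw [← tel, hU_def, Finset.mul_sum]
    refine Finset.sum_le_sum fun S _ => ?_
    rw [← mul_assoc]
    exact (pt S).2
  have hTL : L ≤ D / c := (le_div_iff₀ hc).mpr (by linarith [hLD])
  have hTU : D / c ≤ U := (div_le_iff₀ hc).mpr (by linarith [hUD])
  -- U - L small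
  have hD0 : 0 ≤ D := by
    have h1 : Real.exp (-(c * (x + 1) ^ 2)) ≤ 1 :=
      Real.exp_le_one_iff.mpr (neg_nonpos.mpr (by positivity))
    rw [hD_def]; linarith
  have hD1 : D ≤ 1 := by
    have := Real.exp_pos (-(c * (x + 1) ^ 2)); rw [hD_def]; linarith
  have hUL : U - L ≤ (2 * x + 1) * D := by
    have heq : U - L = ∑ S ∈ Finset.range (n + 1),
        (2 * (S : ℝ) + 1) * (Real.exp (-(c * (S : ℝ) ^ 2)) - Real.exp (-(c * ((S : ℝ) + 1) ^ 2))) := by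
      rw [hU_def, hL_def, ← Finset.sum_sub_distrib]
      exact Finset.sum_congr rfl fun S _ => by ring
    rw [heq, ← tel, Finset.mul_sum]
    refine Finset.sum_le_sum fun S hS => ?_
    have hSn : (S : ℝ) ≤ x := by
      rw [hx_def]; exact_mod_cast Nat.lt_succ_iff.mp (Finset.mem_range.mp hS)
    have hdiff0 : 0 ≤ Real.exp (-(c * (S : ℝ) ^ 2)) - Real.exp (-(c * ((S : ℝ) + 1) ^ 2)) := by
      have := exp_mono_aux c (S : ℝ) ((S : ℝ) + 1) hc (by linarith [S.cast_nonneg (α := ℝ)])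
        S.cast_nonneg
      linarith
    have : 2 * (S : ℝ) + 1 ≤ 2 * x + 1 := by linarith
    exact mul_le_mul_of_nonneg_right this hdiff0
  have hFT : |F - D / c| ≤ 2 * x + 1 := by
    rw [abs_le]
    have h1 : (2 * x + 1) * D ≤ (2 * x + 1) * 1 := by nlinarith
    constructor <;> nlinarith
  -- rewrite the sum
  have hXsum : (∑ S ∈ Finset.range (n + 1), (2 * (S : ℝ) + 1) *
      Real.exp (-(β / (x / 2) ^ 2) *
        ((S : ℝ) * ((S : ℝ) + 1) / 2 - (x / 2) * (x / 2 + 1))))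
      = Real.exp A * F := by
    rw [hF_def, Finset.mul_sum]
    refine Finset.sum_congr rfl fun S _ => ?_
    rw [hexp S, Real.exp_add]
    ring
  -- rewrite g
  have hg : Real.exp A * ((1 - Real.exp (-(2 * β * ((x + 1) ^ 2 / x ^ 2)))) *
        ((x ^ 2 / (x + 1) ^ 2) * (2 * β)⁻¹))
      = Real.exp A * ((D / c) * ((x + 1) ^ 2)⁻¹) := by
    have harg : -(2 * β * ((x + 1) ^ 2 / x ^ 2)) = -(c * (x + 1) ^ 2) := by
      rw [hc_def]; field_simp
    have hfield : ∀ d : ℝ, (d / c) * ((x + 1) ^ 2)⁻¹ = d * ((x ^ 2 / (x + 1) ^ 2) * (2 * β)⁻¹) := by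
      intro d
      have hx1 : x + 1 ≠ 0 := by linarith
      have hb2 : (2 * β) ≠ 0 := by positivity
      rw [hc_def]
      field_simp
    rw [harg, ← hD_def, hfield D]
  have hrw : ((n + 1 : ℝ) ^ 2)⁻¹ *
        (∑ S ∈ Finset.range (n + 1), (2 * (S : ℝ) + 1) *
          Real.exp (-(β / ((n : ℝ) / 2) ^ 2) *
            ((S : ℝ) * ((S : ℝ) + 1) / 2 - ((n : ℝ) / 2) * ((n : ℝ) / 2 + 1))))
      - Real.exp A * ((1 - Real.exp (-(2 * β * ((x + 1) ^ 2 / x ^ 2)))) *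
          ((x ^ 2 / (x + 1) ^ 2) * (2 * β)⁻¹))
      = (Real.exp A * ((x + 1) ^ 2)⁻¹) * (F - D / c) := by
    rw [hg]
    rw [show ((n : ℝ) + 1) = x + 1 from rfl] at *
    rw [hXsum]
    ring
  rw [hrw, abs_mul, abs_of_pos (by positivity)]
  have hRHS : Real.exp A * ((2 * x + 1) / (x + 1) ^ 2)
      = (Real.exp A * ((x + 1) ^ 2)⁻¹) * (2 * x + 1) := by ring
  rw [hRHS]
  exact mul_le_mul_of_nonneg_left hFT (by positivity)

/-- The scaled Heisenberg dimer partition function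
`(2s+1)^{-2} Σ_{S=0}^{2s} (2S+1) exp(−(β/s²)(½S(S+1) − s(s+1)))`, with `s = n/2`,
converges as `s → ∞` to the classical dimer partition function `sinh(β)/β`. -/
theorem dimer_partition_function_classical_limit (β : ℝ) (hβ : 0 < β) :
    Tendsto (fun n : ℕ =>
      ((n + 1 : ℝ) ^ 2)⁻¹ *
        ∑ S ∈ Finset.range (n + 1), (2 * (S : ℝ) + 1) *
          Real.exp (-(β / ((n : ℝ) / 2) ^ 2) *
            ((S : ℝ) * ((S : ℝ) + 1) / 2 - ((n : ℝ) / 2) * ((n : ℝ) / 2 + 1))))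
      atTop (𝓝 (Real.sinh β / β)) := by
  set X : ℕ → ℝ := fun n =>
      ((n + 1 : ℝ) ^ 2)⁻¹ *
        ∑ S ∈ Finset.range (n + 1), (2 * (S : ℝ) + 1) *
          Real.exp (-(β / ((n : ℝ) / 2) ^ 2) *
            ((S : ℝ) * ((S : ℝ) + 1) / 2 - ((n : ℝ) / 2) * ((n : ℝ) / 2 + 1))) with hX_def
  set g : ℕ → ℝ := fun n =>
      Real.exp (β * (((n : ℝ) + 2) / (n : ℝ))) *
        ((1 - Real.exp (-(2 * β * (((n : ℝ) + 1) ^ 2 / (n : ℝ) ^ 2)))) *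
          (((n : ℝ) ^ 2 / ((n : ℝ) + 1) ^ 2) * (2 * β)⁻¹)) with hg_def
  set h : ℕ → ℝ := fun n =>
      Real.exp (β * (((n : ℝ) + 2) / (n : ℝ))) * ((2 * (n : ℝ) + 1) / ((n : ℝ) + 1) ^ 2)
      with hh_def
  -- component limits
  have t1 : Tendsto (fun n : ℕ => ((n : ℝ) + 2) / (n : ℝ)) atTop (𝓝 1) := by
    have h2 : Tendsto (fun n : ℕ => 1 + 2 / (n : ℝ)) atTop (𝓝 (1 + 0)) :=
      tendsto_const_nhds.add (tendsto_const_div_atTop_nhds_zero_nat 2)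
    rw [add_zero] at h2
    refine h2.congr' ?_
    filter_upwards [eventually_ge_atTop 1] with n hn
    have hn0 : (n : ℝ) ≠ 0 := by positivity
    field_simp
  have t2 : Tendsto (fun n : ℕ => ((n : ℝ) + 1) / (n : ℝ)) atTop (𝓝 1) := by
    have h2 : Tendsto (fun n : ℕ => 1 + 1 / (n : ℝ)) atTop (𝓝 (1 + 0)) :=
      tendsto_const_nhds.add (tendsto_const_div_atTop_nhds_zero_nat 1)
    rw [add_zero] at h2
    refine h2.congr' ?_
    filter_upwards [eventually_ge_atTop 1] with n hn
    have hn0 : (n : ℝ) ≠ 0 := by positivity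
    field_simp
  have t2sq : Tendsto (fun n : ℕ => ((n : ℝ) + 1) ^ 2 / (n : ℝ) ^ 2) atTop (𝓝 1) := by
    have := (t2.pow 2)
    simp only [one_pow] at this
    refine this.congr fun n => ?_
    rw [div_pow]
  have t3 : Tendsto (fun n : ℕ => (n : ℝ) ^ 2 / ((n : ℝ) + 1) ^ 2) atTop (𝓝 1) := by
    have hinv := t2sq.inv₀ one_ne_zero
    rw [inv_one] at hinv
    refine hinv.congr' ?_
    filter_upwards [eventually_ge_atTop 1] with n hn
    have hn0 : ((n : ℝ) + 1) ^ 2 ≠ 0 := by positivity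
    rw [inv_div]
  have texp : Tendsto (fun n : ℕ => Real.exp (β * (((n : ℝ) + 2) / (n : ℝ)))) atTop
      (𝓝 (Real.exp β)) := by
    have hmul : Tendsto (fun n : ℕ => β * (((n : ℝ) + 2) / (n : ℝ))) atTop (𝓝 (β * 1)) :=
      tendsto_const_nhds.mul t1
    rw [mul_one] at hmul
    exact (Real.continuous_exp.tendsto β).comp hmul
  -- limit of g
  have hGlim : Tendsto g atTop (𝓝 (Real.sinh β / β)) := by
    have hmul2 : Tendsto (fun n : ℕ => -(2 * β * (((n : ℝ) + 1) ^ 2 / (n : ℝ) ^ 2))) atTop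
        (𝓝 (-(2 * β * 1))) := (tendsto_const_nhds.mul t2sq).neg
    have hexp2 : Tendsto (fun n : ℕ =>
        Real.exp (-(2 * β * (((n : ℝ) + 1) ^ 2 / (n : ℝ) ^ 2)))) atTop
        (𝓝 (Real.exp (-(2 * β)))) := by
      have := (Real.continuous_exp.tendsto (-(2 * β * 1))).comp hmul2
      rw [mul_one] at this
      exact this
    have hG : Tendsto g atTop (𝓝 (Real.exp β *
        ((1 - Real.exp (-(2 * β))) * (1 * (2 * β)⁻¹)))) :=
      texp.mul ((tendsto_const_nhds.sub hexp2).mul (t3.mul tendsto_const_nhds))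
    have hval : Real.exp β * ((1 - Real.exp (-(2 * β))) * (1 * (2 * β)⁻¹))
        = Real.sinh β / β := by
      rw [Real.sinh_eq]
      have hprod : Real.exp β * Real.exp (-(2 * β)) = Real.exp (-β) := by
        rw [← Real.exp_add]; ring_nf
      field_simp
      nlinarith [hprod]
    rwa [hval] at hG
  -- limit of h
  have hHlim : Tendsto h atTop (𝓝 0) := by
    have hb : Tendsto (fun n : ℕ => (2 * (n : ℝ) + 1) / ((n : ℝ) + 1) ^ 2) atTop (𝓝 0) := by
      apply squeeze_zero (fun n => by positivity)
        (g := fun n : ℕ => 3 / ((n : ℝ) + 1))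
      · intro n
        have hn1 : (0 : ℝ) < (n : ℝ) + 1 := by positivity
        rw [div_le_div_iff₀ (by positivity) hn1]
        nlinarith [Nat.cast_nonneg (α := ℝ) n]
      · have := tendsto_one_div_add_atTop_nhds_zero_nat (𝕜 := ℝ)
        have h3 : Tendsto (fun n : ℕ => 3 * (1 / ((n : ℝ) + 1))) atTop (𝓝 (3 * 0)) :=
          tendsto_const_nhds.mul this
        rw [mul_zero] at h3
        refine h3.congr fun n => by ring
      
    have := texp.mul hb
    rw [mul_zero] at this
    exact this
  -- combine
  have hdiff : Tendsto (fun n => X n - g n) atTop (𝓝 0) := by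
    refine squeeze_zero_norm' ?_ hHlim
    filter_upwards [eventually_ge_atTop 1] with n hn
    have := dimer_key β hβ n hn
    simpa [Real.norm_eq_abs, hX_def, hg_def, hh_def] using this
  have := hGlim.add hdiff
  rw [add_zero] at this
  refine this.congr fun n => by ring
end
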